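/- Let y ∈ ℝ^M be a vector with at least one strictly positive entry, and let y₊ denote the vector obtained from y by replacing all negative entries with zero. Then x* = y₊/‖y₊‖ is the unique minimizer of ‖x − y‖² over all x ∈ ℝ^M satisfying x ≥ 0 (elementwise) and ‖x‖ = 1. -/

import Mathlib

open scoped RealInnerProductSpace

/-- projection onto the intersection of the non-negative orthant and the
unit sphere, case of a vector with at least one positive entry. -/
theorem stmt6 {M : ℕ} (y : EuclideanSpace ℝ (Fin M)) (hy : ∃ i, 0 < y i) :
    ∀ yplus xstar : EuclideanSpace ℝ (Fin M),
      yplus = (fun i => max (y i) 0) → xstar = ‖yplus‖⁻¹ • yplus →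
      ((∀ i, 0 ≤ xstar i) ∧ ‖xstar‖ = 1 ∧
        ∀ x : EuclideanSpace ℝ (Fin M), (∀ i, 0 ≤ x i) → ‖x‖ = 1 →
          ‖xstar - y‖ ^ 2 ≤ ‖x - y‖ ^ 2 ∧ (‖x - y‖ ^ 2 = ‖xstar - y‖ ^ 2 → x = xstar)) := by
  intro yplus xstar hyp hxs
  obtain ⟨i0, hi0⟩ := hy
  have hpos : 0 < yplus i0 := by
    rw [hyp]; exact lt_of_lt_of_le hi0 (le_max_left _ _)
  have hne : yplus ≠ 0 := by
    intro h; rw [h] at hpos; simp at hpos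
  have hnp : 0 < ‖yplus‖ := norm_pos_iff.mpr hne
  have hinner : ∀ a b : EuclideanSpace ℝ (Fin M), (inner ℝ a b : ℝ) = ∑ i, a i * b i := by
    intro a b
    simp [PiLp.inner_apply, RCLike.inner_apply, mul_comm]
  have h1 : (inner ℝ yplus y : ℝ) = ‖yplus‖ ^ 2 := by
    rw [← real_inner_self_eq_norm_sq, hinner, hinner]
    apply Finset.sum_congr rfl
    intro i _
    rw [hyp]
    rcases le_or_gt 0 (y i) with h | h
    · simp [max_eq_left h]
    · simp [max_eq_right h.le]
  have h2 : (inner ℝ xstar y : ℝ) = ‖yplus‖ := by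
    rw [hxs, real_inner_smul_left, h1, sq]
    field_simp
  have hxnn : ∀ i, 0 ≤ xstar i := by
    intro i
    rw [hxs]
    have : (‖yplus‖⁻¹ • yplus) i = ‖yplus‖⁻¹ * yplus i := rfl
    rw [this, hyp]
    positivity
  have hxn1 : ‖xstar‖ = 1 := by
    rw [hxs, norm_smul, norm_inv, norm_norm, inv_mul_cancel₀ hnp.ne']
  refine ⟨hxnn, hxn1, ?_⟩
  intro x hx hxnorm
  have hA : (inner ℝ x y : ℝ) ≤ (inner ℝ x yplus : ℝ) := by
    rw [hinner, hinner]
    apply Finset.sum_le_sum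
    intro i _
    rw [hyp]
    exact mul_le_mul_of_nonneg_left (le_max_left _ _) (hx i)
  have hB : (inner ℝ x yplus : ℝ) ≤ ‖yplus‖ := by
    have := real_inner_le_norm x yplus
    rwa [hxnorm, one_mul] at this
  have hkey : (inner ℝ x y : ℝ) ≤ ‖yplus‖ := le_trans hA hB
  have hexp : ∀ z : EuclideanSpace ℝ (Fin M),
      ‖z - y‖ ^ 2 = ‖z‖ ^ 2 - 2 * (inner ℝ z y : ℝ) + ‖y‖ ^ 2 := fun z => norm_sub_sq_real z y
  have he1 : ‖xstar - y‖ ^ 2 = 1 - 2 * ‖yplus‖ + ‖y‖ ^ 2 := by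
    rw [hexp, hxn1, h2]; ring
  have he2 : ‖x - y‖ ^ 2 = 1 - 2 * (inner ℝ x y : ℝ) + ‖y‖ ^ 2 := by
    rw [hexp, hxnorm]; ring
  constructor
  · rw [he1, he2]; linarith
  · intro heq
    rw [he1, he2] at heq
    have hxy : (inner ℝ x y : ℝ) = ‖yplus‖ := by linarith
    have hxyp : (inner ℝ x yplus : ℝ) = ‖x‖ * ‖yplus‖ := by
      rw [hxnorm, one_mul]
      linarith
    have := (inner_eq_norm_mul_iff_real).mp hxyp
    rw [hxnorm, one_smul] at this
    have h3 : ‖yplus‖⁻¹ • (‖yplus‖ • x) = ‖yplus‖⁻¹ • yplus := by rw [this]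
    rw [smul_smul, inv_mul_cancel₀ hnp.ne', one_smul] at h3
    rw [hxs, ← h3]
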